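/- For K = ℝ₊^m with compact base the unit simplex Δ_m, the radius of robust feasibility equals the distance exactly: ρ(Ā, b̄) = dist(0_{n+1}, E(Ā, b̄, Δ_m)) = inf{ t : ∃ z ∈ ℝ^n, s ∈ ℝ, λ ∈ ℝ₊^m, Σ_i λ_i = 1, ‖(z,s)‖ ≤ t, z = Āᵀλ, s ≥ −b̄ᵀλ }. -/

import Mathlib

open Finset Pointwise

noncomputable def enorm {k : ℕ} (v : Fin k → ℝ) : ℝ := Real.sqrt (∑ i, v i ^ 2)

def coneHull {k : ℕ} (X : Set (Fin k → ℝ)) : Set (Fin k → ℝ) :=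
  {y | y = 0 ∨ ∃ t : ℝ, 0 ≤ t ∧ ∃ c ∈ convexHull ℝ X, y = t • c}

def dualCone {m : ℕ} (K : Set (Fin m → ℝ)) : Set (Fin m → ℝ) :=
  {a | ∀ x ∈ K, 0 ≤ ∑ i, a i * x i}

def Feas {m n : ℕ} (K : Set (Fin m → ℝ)) (Abar : Fin m → Fin n → ℝ) (bbar : Fin m → ℝ)
    (r : Fin m → ℝ) : Set (Fin n → ℝ) :=
  {x | ∀ (a : Fin m → Fin n → ℝ) (b : Fin m → ℝ),
      (∀ i, enorm (Fin.snoc (a i - Abar i) (b i - bbar i)) ≤ r i) →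
      (fun i => (∑ j, a i j * x j) + b i) ∈ -K}

def Adm {m n : ℕ} (K : Set (Fin m → ℝ)) (Abar : Fin m → Fin n → ℝ) (bbar : Fin m → ℝ) :
    Set (Fin m → ℝ) :=
  {r | (∀ i, 0 ≤ r i) ∧ (Feas K Abar bbar r).Nonempty}

noncomputable def rrf {m n : ℕ} (K : Set (Fin m → ℝ)) (Abar : Fin m → Fin n → ℝ)
    (bbar : Fin m → ℝ) : ℝ :=
  sSup {α : ℝ | 0 ≤ α ∧ (fun _ => α) ∈ Adm K Abar bbar}

def Epi {m n : ℕ} (Abar : Fin m → Fin n → ℝ) (bbar : Fin m → ℝ) (B : Set (Fin m → ℝ)) :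
    Set (Fin (n + 1) → ℝ) :=
  {y | ∃ l ∈ B, ∃ w : ℝ, 0 ≤ w ∧
    y = Fin.snoc (fun j => ∑ i, l i * Abar i j) (-(∑ i, l i * bbar i) + w)}

noncomputable def edist0 {m n : ℕ} (Abar : Fin m → Fin n → ℝ) (bbar : Fin m → ℝ)
    (B : Set (Fin m → ℝ)) : ℝ :=
  sInf {t : ℝ | ∃ y ∈ Epi Abar bbar B, t = _root_.enorm y}

def IsCompactBase {m : ℕ} (C B : Set (Fin m → ℝ)) : Prop :=
  IsCompact B ∧ Convex ℝ B ∧ B ⊆ C ∧ (0 : Fin m → ℝ) ∉ B ∧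
    C = {y | ∃ t : ℝ, 0 ≤ t ∧ ∃ b ∈ B, y = t • b}

def IsClosedConvexCone {m : ℕ} (K : Set (Fin m → ℝ)) : Prop :=
  IsClosed K ∧ Convex ℝ K ∧ ∀ t : ℝ, 0 ≤ t → ∀ x ∈ K, t • x ∈ K

noncomputable def c1 {m : ℕ} (n : ℕ) (B : Set (Fin m → ℝ)) : ℝ :=
  (sSup {t : ℝ | ∃ l ∈ B, ∃ u : Fin m → (Fin (n + 1) → ℝ),
    (∀ i, _root_.enorm (u i) ≤ 1) ∧ t = _root_.enorm (∑ i, l i • u i)})⁻¹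

noncomputable def c2 {m : ℕ} (B : Set (Fin m → ℝ)) : ℝ :=
  (sInf {t : ℝ | ∃ l ∈ B, t = ∑ i, |l i|})⁻¹
/-! ### Auxiliary lemmas -/

noncomputable def toE {k : ℕ} (v : Fin k → ℝ) : EuclideanSpace ℝ (Fin k) :=
  (WithLp.equiv 2 _).symm v

open scoped RealInnerProductSpace

lemma enorm_eq_norm {k : ℕ} (v : Fin k → ℝ) : _root_.enorm v = ‖toE v‖ := by
  rw [EuclideanSpace.norm_eq]
  simp [_root_.enorm, toE, sq_abs]

lemma inner_toE {k : ℕ} (u v : Fin k → ℝ) : ⟪toE u, toE v⟫ = ∑ i, u i * v i := by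
  simp [PiLp.inner_apply, toE, RCLike.inner_apply, conj_trivial]
  exact Finset.sum_congr rfl fun _ _ => mul_comm _ _

lemma enorm_nonneg' {k : ℕ} (v : Fin k → ℝ) : 0 ≤ _root_.enorm v := Real.sqrt_nonneg _

lemma toE_smul {k : ℕ} (c : ℝ) (v : Fin k → ℝ) : toE (c • v) = c • toE v := rfl

lemma enorm_smul' {k : ℕ} (c : ℝ) (v : Fin k → ℝ) : _root_.enorm (c • v) = |c| * _root_.enorm v := by
  rw [enorm_eq_norm, enorm_eq_norm, toE_smul, norm_smul, Real.norm_eq_abs]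

lemma abs_dot_le {k : ℕ} (u v : Fin k → ℝ) : |∑ i, u i * v i| ≤ _root_.enorm u * _root_.enorm v := by
  rw [← inner_toE, enorm_eq_norm, enorm_eq_norm]
  exact abs_real_inner_le_norm _ _

lemma sum_snoc_mul {n : ℕ} (u v : Fin n → ℝ) (a b : ℝ) :
    ∑ i : Fin (n+1), Fin.snoc u a i * Fin.snoc v b i = (∑ j, u j * v j) + a * b := by
  rw [Fin.sum_univ_castSucc]
  simp

lemma enorm_sq {k : ℕ} (v : Fin k → ℝ) : _root_.enorm v ^ 2 = ∑ i, v i ^ 2 := by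
  rw [_root_.enorm, Real.sq_sqrt]
  exact Finset.sum_nonneg fun i _ => sq_nonneg _

lemma enorm_snoc_sq {n : ℕ} (z : Fin n → ℝ) (s : ℝ) :
    _root_.enorm (Fin.snoc z s) ^ 2 = (∑ j, z j ^ 2) + s ^ 2 := by
  rw [enorm_sq, Fin.sum_univ_castSucc]
  simp

lemma one_le_enorm_snoc_one {n : ℕ} (x : Fin n → ℝ) : 1 ≤ _root_.enorm (Fin.snoc x 1) := by
  have h : (1:ℝ) ≤ _root_.enorm (Fin.snoc x 1) ^ 2 := by
    rw [enorm_snoc_sq]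
    nlinarith [Finset.sum_nonneg (fun i (_ : i ∈ Finset.univ) => sq_nonneg (x i))]
  nlinarith [enorm_nonneg' (Fin.snoc x (1:ℝ))]

lemma abs_coord_le_enorm {k : ℕ} (v : Fin k → ℝ) (i : Fin k) : |v i| ≤ _root_.enorm v := by
  rw [_root_.enorm, ← Real.sqrt_sq_eq_abs]
  apply Real.sqrt_le_sqrt
  exact Finset.single_le_sum (fun j _ => sq_nonneg (v j)) (Finset.mem_univ i)

lemma enorm_snoc_neg_one {n : ℕ} (x : Fin n → ℝ) :
    _root_.enorm (Fin.snoc x (-1)) = _root_.enorm (Fin.snoc x 1) := by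
  unfold _root_.enorm
  congr 1
  rw [Fin.sum_univ_castSucc, Fin.sum_univ_castSucc]
  simp

lemma enorm_snoc_neg_fst {n : ℕ} (z : Fin n → ℝ) (s : ℝ) :
    _root_.enorm (Fin.snoc (fun j => -(z j)) s) = _root_.enorm (Fin.snoc z s) := by
  unfold _root_.enorm
  congr 1
  rw [Fin.sum_univ_castSucc, Fin.sum_univ_castSucc]
  simp

/-! ### Robust feasibility characterization -/

lemma mem_feas_iff {m n : ℕ} (Abar : Fin m → Fin n → ℝ) (bbar : Fin m → ℝ)
    {α : ℝ} (hα : 0 ≤ α) (x : Fin n → ℝ) :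
    x ∈ Feas {v : Fin m → ℝ | ∀ i, 0 ≤ v i} Abar bbar (fun _ => α) ↔
    ∀ i, (∑ j, Abar i j * x j) + bbar i + α * _root_.enorm (Fin.snoc x 1) ≤ 0 := by
  set N := _root_.enorm (Fin.snoc x 1) with hNdef
  have hN1 : 1 ≤ N := one_le_enorm_snoc_one x
  have hN0 : 0 < N := lt_of_lt_of_le one_pos hN1
  constructor
  · intro hx i
    have key := hx (fun i' j => Abar i' j + (α / N) * x j) (fun i' => bbar i' + (α / N) * 1) ?_
    · have h2 : ∀ i', 0 ≤ -((∑ j, (Abar i' j + (α / N) * x j) * x j) + (bbar i' + (α / N) * 1)) := by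
        have key' : ∀ i', (∑ j, (Abar i' j + (α / N) * x j) * x j) + (bbar i' + (α / N)) ≤ 0 := by
          simpa [Set.mem_neg, Pi.neg_def, Set.mem_setOf_eq] using key
        intro i'; linarith [key' i']
      have h3 := h2 i
      have hsum : ∑ j, (Abar i j + (α / N) * x j) * x j
          = (∑ j, Abar i j * x j) + (α / N) * ∑ j, x j ^ 2 := by
        rw [Finset.mul_sum, ← Finset.sum_add_distrib]
        exact Finset.sum_congr rfl fun j _ => by ring
      have hsq : (∑ j, x j ^ 2) + 1 = N ^ 2 := by
        rw [hNdef, enorm_snoc_sq]; norm_num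
      have : (∑ j, Abar i j * x j) + bbar i + (α / N) * N ^ 2 ≤ 0 := by
        rw [← hsq]; nlinarith [h3, hsum]
      have hdiv : (α / N) * N ^ 2 = α * N := by
        field_simp
      linarith [this, hdiv ▸ this]
    · intro i'
      have : (fun j => Abar i' j + α / N * x j) - Abar i' = (α / N) • x := by
        funext j
        show Abar i' j + α / N * x j - Abar i' j = α / N * x j
        ring
      rw [this]
      have hb : bbar i' + α / N * 1 - bbar i' = α / N := by ring
      rw [hb]
      have : Fin.snoc ((α / N) • x) (α / N) = (α / N) • (Fin.snoc x (1:ℝ) : Fin (n+1) → ℝ) := by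
        funext k
        refine Fin.lastCases ?_ (fun j => ?_) k <;> simp
      rw [this, enorm_smul', abs_of_nonneg (by positivity)]
      have hNe : N * (α / N) = α := by field_simp
      have hfin : α / N * _root_.enorm (Fin.snoc x (1:ℝ)) ≤ α := by rw [← hNdef]; nlinarith
      exact hfin
  · intro h a b hab
    simp only [Set.mem_neg, Pi.neg_def, Set.mem_setOf_eq]
    intro i
    have hcs : |∑ k : Fin (n+1), Fin.snoc (a i - Abar i) (b i - bbar i) k * Fin.snoc x 1 k|
        ≤ α * N := by
      calc |∑ k : Fin (n+1), Fin.snoc (a i - Abar i) (b i - bbar i) k * Fin.snoc x 1 k|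
          ≤ _root_.enorm (Fin.snoc (a i - Abar i) (b i - bbar i)) * N := abs_dot_le _ _
        _ ≤ α * N := by
            apply mul_le_mul_of_nonneg_right (hab i) (le_of_lt hN0)
    rw [sum_snoc_mul] at hcs
    have hle : (∑ j, (a i j - Abar i j) * x j) + (b i - bbar i) * 1 ≤ α * N :=
      le_trans (le_abs_self _) hcs
    have hexp : ∑ j, a i j * x j = (∑ j, (a i j - Abar i j) * x j) + ∑ j, Abar i j * x j := by
      rw [← Finset.sum_add_distrib]; congr 1; funext j; ring
    have := h i
    nlinarith [hle, this]

/-! ### The linear map into Euclidean space -/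

noncomputable def gmap {m n : ℕ} (Abar : Fin m → Fin n → ℝ) (bbar : Fin m → ℝ) :
    ((Fin m → ℝ) × ℝ) →ₗ[ℝ] EuclideanSpace ℝ (Fin (n + 1)) where
  toFun p := toE (Fin.snoc (fun j => ∑ i, p.1 i * Abar i j) (-(∑ i, p.1 i * bbar i) + p.2))
  map_add' p q := by
    ext k
    refine Fin.lastCases ?_ (fun j => ?_) k <;>
      simp [toE, WithLp.equiv_symm_apply, PiLp.toLp_apply, Fin.snoc_last, Fin.snoc_castSucc, add_mul,
        Finset.sum_add_distrib] <;> ring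
  map_smul' c p := by
    ext k
    refine Fin.lastCases ?_ (fun j => ?_) k <;>
      simp [toE, WithLp.equiv_symm_apply, PiLp.toLp_apply, Fin.snoc_last, Fin.snoc_castSucc,
        Finset.mul_sum, mul_add, mul_assoc]

set_option maxHeartbeats 800000 in
lemma key_min {m n : ℕ} (Abar : Fin m → Fin n → ℝ) (bbar : Fin m → ℝ) (hm : 0 < m) :
    ∃ (z : Fin n → ℝ) (s : ℝ),
      0 ≤ s ∧
      _root_.enorm (Fin.snoc z s) = edist0 Abar bbar (stdSimplex ℝ (Fin m)) ∧
      ∀ i, edist0 Abar bbar (stdSimplex ℝ (Fin m)) ^ 2 ≤ (∑ j, z j * Abar i j) - s * bbar i := by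
  classical
  set Δ := stdSimplex ℝ (Fin m) with hΔ
  set g := gmap Abar bbar with hg
  set S := {t : ℝ | ∃ y ∈ Epi Abar bbar Δ, t = _root_.enorm y} with hS
  have hgdef : ∀ l w, g (l, w)
      = toE (Fin.snoc (fun j => ∑ i, l i * Abar i j) (-(∑ i, l i * bbar i) + w)) := fun _ _ => rfl
  have hgnorm : ∀ l w, ‖g (l, w)‖
      = _root_.enorm (Fin.snoc (fun j => ∑ i, l i * Abar i j) (-(∑ i, l i * bbar i) + w)) := by
    intro l w; rw [hgdef, ← enorm_eq_norm]
  set C := ∑ i, |bbar i| with hC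
  have hC0 : 0 ≤ C := Finset.sum_nonneg fun i _ => abs_nonneg _
  have hCb : ∀ l ∈ Δ, |∑ i, l i * bbar i| ≤ C := by
    intro l hl
    calc |∑ i, l i * bbar i| ≤ ∑ i, |l i * bbar i| := Finset.abs_sum_le_sum_abs _ _
      _ ≤ ∑ i, |bbar i| := by
          apply Finset.sum_le_sum
          intro i _
          rw [abs_mul, abs_of_nonneg (hl.1 i)]
          have hli : l i ≤ 1 := by
            have := Finset.single_le_sum (f := l) (fun j _ => hl.1 j) (Finset.mem_univ i)
            rw [hl.2] at this; exact this
          nlinarith [abs_nonneg (bbar i), hl.1 i]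
  set l₀ : Fin m → ℝ := fun _ => (m : ℝ)⁻¹ with hl₀def
  have hl₀ : l₀ ∈ Δ := by
    constructor
    · intro i; positivity
    · simp [hl₀def, Finset.sum_const, Finset.card_univ]
      field_simp
  set y₀ := g (l₀, 0) with hy₀
  set W := ‖y₀‖ + C with hW
  have hW0 : 0 ≤ W := add_nonneg (norm_nonneg _) hC0
  have hKcpt : IsCompact (g '' (Δ ×ˢ Set.Icc (0:ℝ) W)) :=
    (((isCompact_stdSimplex _ _).prod isCompact_Icc).image g.continuous_of_finiteDimensional)
  have hKne : (g '' (Δ ×ˢ Set.Icc (0:ℝ) W)).Nonempty :=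
    ⟨y₀, ⟨(l₀, 0), ⟨hl₀, ⟨le_refl _, hW0⟩⟩, rfl⟩⟩
  obtain ⟨ystar, hystar, hmin⟩ := hKcpt.exists_isMinOn hKne continuous_norm.continuousOn
  obtain ⟨⟨lstar, wstar⟩, ⟨hlstar, hwstar⟩, hrep⟩ := hystar
  have hmin' : ∀ y ∈ g '' (Δ ×ˢ Set.Icc (0:ℝ) W), ‖ystar‖ ≤ ‖y‖ := fun y hy => hmin hy
  have hglob : ∀ l ∈ Δ, ∀ w : ℝ, 0 ≤ w → ‖ystar‖ ≤ ‖g (l, w)‖ := by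
    intro l hl w hw
    by_cases hwW : w ≤ W
    · exact hmin' _ ⟨(l, w), ⟨hl, ⟨hw, hwW⟩⟩, rfl⟩
    · push_neg at hwW
      have h1 : ‖ystar‖ ≤ ‖y₀‖ := hmin' _ ⟨(l₀, 0), ⟨hl₀, ⟨le_refl _, hW0⟩⟩, rfl⟩
      have h2 : |(-(∑ i, l i * bbar i) + w)| ≤ ‖g (l, w)‖ := by
        rw [hgnorm]
        have := abs_coord_le_enorm
          (Fin.snoc (fun j => ∑ i, l i * Abar i j) (-(∑ i, l i * bbar i) + w)) (Fin.last n)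
        simpa [Fin.snoc_last] using this
      have h3 : w - C ≤ |(-(∑ i, l i * bbar i) + w)| := by
        have := hCb l hl
        cases abs_cases (-(∑ i, l i * bbar i) + w) with
        | inl h => rw [h.1]; cases abs_cases (∑ i, l i * bbar i) with
          | inl h' => linarith [this, h'.1]
          | inr h' => linarith [this, h'.1]
        | inr h =>
          cases abs_cases (∑ i, l i * bbar i) with
          | inl h' => linarith [this, h'.1, h.1]
          | inr h' => linarith [this, h'.1, h.1]
      have : ‖y₀‖ < ‖g (l, w)‖ := by
        calc ‖y₀‖ = W - C := by rw [hW]; ring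
          _ < w - C := by linarith
          _ ≤ |(-(∑ i, l i * bbar i) + w)| := h3
          _ ≤ ‖g (l, w)‖ := h2
      linarith
  have hmemS : ‖ystar‖ ∈ S := by
    refine ⟨Fin.snoc (fun j => ∑ i, lstar i * Abar i j) (-(∑ i, lstar i * bbar i) + wstar),
      ⟨lstar, hlstar, wstar, hwstar.1, rfl⟩, ?_⟩
    rw [← hrep, hgnorm]
  have hlbS : ∀ t ∈ S, ‖ystar‖ ≤ t := by
    rintro t ⟨y, ⟨l, hl, w, hw, rfl⟩, rfl⟩
    rw [← hgnorm]
    exact hglob l hl w hw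
  have hdist : edist0 Abar bbar Δ = ‖ystar‖ := by
    apply le_antisymm
    · exact csInf_le ⟨‖ystar‖, hlbS⟩ hmemS
    · exact le_csInf ⟨_, hmemS⟩ hlbS
  have hconv : Convex ℝ (g '' (Δ ×ˢ Set.Ici (0:ℝ))) :=
    ((convex_stdSimplex ℝ _).prod (convex_Ici 0)).linear_image g
  have hmemfull : ystar ∈ g '' (Δ ×ˢ Set.Ici (0:ℝ)) :=
    ⟨(lstar, wstar), ⟨hlstar, hwstar.1⟩, hrep⟩
  have hproj : ‖(0 : EuclideanSpace ℝ (Fin (n+1))) - ystar‖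
      = ⨅ w : (g '' (Δ ×ˢ Set.Ici (0:ℝ))),
          ‖(0 : EuclideanSpace ℝ (Fin (n+1))) - (w : EuclideanSpace ℝ (Fin (n+1)))‖ := by
    haveI : Nonempty ↑(g '' (Δ ×ˢ Set.Ici (0:ℝ))) := ⟨⟨ystar, hmemfull⟩⟩
    apply le_antisymm
    · apply le_ciInf
      rintro ⟨y, ⟨⟨l, w⟩, ⟨hl, hw⟩, rfl⟩⟩
      simpa using hglob l hl w hw
    · have hbdd : BddBelow (Set.range fun w : ↥(g '' (Δ ×ˢ Set.Ici (0:ℝ))) =>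
          ‖(0 : EuclideanSpace ℝ (Fin (n+1))) - (w : EuclideanSpace ℝ (Fin (n+1)))‖) := by
        refine ⟨0, ?_⟩
        rintro t ⟨y, rfl⟩
        exact norm_nonneg _
      exact ciInf_le hbdd ⟨ystar, hmemfull⟩
  have hvar := (norm_eq_iInf_iff_real_inner_le_zero hconv hmemfull).mp hproj
  have hvar' : ∀ y ∈ g '' (Δ ×ˢ Set.Ici (0:ℝ)), ‖ystar‖ ^ 2 ≤ ⟪ystar, y⟫ := by
    intro y hy
    have := hvar y hy
    rw [zero_sub, inner_neg_left, inner_sub_right] at this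
    rw [← real_inner_self_eq_norm_sq]
    linarith
  refine ⟨fun j => ∑ i, lstar i * Abar i j, -(∑ i, lstar i * bbar i) + wstar, ?_, ?_, ?_⟩
  · have hy1 : g (lstar, wstar + 1) ∈ g '' (Δ ×ˢ Set.Ici (0:ℝ)) :=
      ⟨(lstar, wstar + 1),
        ⟨hlstar, Set.mem_Ici.mpr (show (0:ℝ) ≤ wstar + 1 by
          have h0 : (0:ℝ) ≤ wstar := hwstar.1; linarith)⟩, rfl⟩
    have h := hvar' _ hy1
    have hsplit : g (lstar, wstar + 1) = ystar + g (0, 1) := by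
      rw [← hrep, ← map_add]
      congr 1
      simp
    have hinner : ⟪g (lstar, wstar), g ((0 : Fin m → ℝ), (1:ℝ))⟫
        = -(∑ i, lstar i * bbar i) + wstar := by
      rw [hgdef, hgdef, inner_toE, sum_snoc_mul]
      simp
    rw [hsplit, inner_add_right, real_inner_self_eq_norm_sq, ← hrep, hinner] at h
    linarith
  · rw [hdist, ← hrep, hgnorm]
  · intro i
    have hsingle : (Pi.single i 1 : Fin m → ℝ) ∈ Δ := by
      constructor
      · intro i'
        rcases eq_or_ne i' i with h | h
        · subst h; simp
        · simp [Pi.single_apply, h]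
      · simp [Finset.sum_pi_single']
    have hyi : g (Pi.single i 1, 0) ∈ g '' (Δ ×ˢ Set.Ici (0:ℝ)) :=
      ⟨(Pi.single i 1, 0), ⟨hsingle, Set.self_mem_Ici⟩, rfl⟩
    have h := hvar' _ hyi
    have hinner : ⟪ystar, g (Pi.single i 1, (0:ℝ))⟫
        = (∑ j, (∑ i', lstar i' * Abar i' j) * Abar i j)
          - (-(∑ i', lstar i' * bbar i') + wstar) * bbar i := by
      rw [← hrep, hgdef, hgdef, inner_toE, sum_snoc_mul]
      have e1 : ∀ j, (∑ i', (Pi.single i 1 : Fin m → ℝ) i' * Abar i' j) = Abar i j := by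
        intro j
        simp [Pi.single_apply, Finset.sum_ite_eq', ite_mul]
      have e2 : (∑ i', (Pi.single i 1 : Fin m → ℝ) i' * bbar i') = bbar i := by
        simp [Pi.single_apply, Finset.sum_ite_eq', ite_mul]
      simp only [e1, e2]
      ring
    rw [hinner] at h
    rw [hdist]
    linarith

/-! ### Assembly -/

lemma simplex_nonempty {m : ℕ} (hm : 0 < m) :
    ((fun _ => (m : ℝ)⁻¹ : Fin m → ℝ)) ∈ stdSimplex ℝ (Fin m) := by
  constructor
  · intro i; positivity
  · simp [Finset.sum_const, Finset.card_univ]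
    field_simp

lemma S_nonempty {m n : ℕ} (Abar : Fin m → Fin n → ℝ) (bbar : Fin m → ℝ) (hm : 0 < m) :
    {t : ℝ | ∃ y ∈ Epi Abar bbar (stdSimplex ℝ (Fin m)), t = _root_.enorm y}.Nonempty := by
  refine ⟨_root_.enorm (Fin.snoc (fun j => ∑ i, (fun _ => (m:ℝ)⁻¹ : Fin m → ℝ) i * Abar i j)
    (-(∑ i, (fun _ => (m:ℝ)⁻¹ : Fin m → ℝ) i * bbar i) + 0)),
    ⟨_, ⟨_, simplex_nonempty hm, 0, le_rfl, rfl⟩, rfl⟩⟩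

lemma ub_lemma {m n : ℕ} (Abar : Fin m → Fin n → ℝ) (bbar : Fin m → ℝ) (hm : 0 < m)
    {α : ℝ} (hα : 0 ≤ α) {x : Fin n → ℝ}
    (hx : x ∈ Feas {v : Fin m → ℝ | ∀ i, 0 ≤ v i} Abar bbar (fun _ => α)) :
    α ≤ edist0 Abar bbar (stdSimplex ℝ (Fin m)) := by
  have hxc := (mem_feas_iff Abar bbar hα x).mp hx
  set N := _root_.enorm (Fin.snoc x 1) with hN
  have hN1 : 1 ≤ N := one_le_enorm_snoc_one x
  have hN0 : 0 < N := lt_of_lt_of_le one_pos hN1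
  apply le_csInf (S_nonempty Abar bbar hm)
  rintro t ⟨y, ⟨l, hl, w, hw, rfl⟩, rfl⟩
  set P : Fin n → ℝ := fun j => ∑ i, l i * Abar i j with hP
  have hdot : ∑ k : Fin (n+1), Fin.snoc P (-(∑ i, l i * bbar i) + w) k * Fin.snoc x (-1) k
      = (∑ j, P j * x j) + (-(∑ i, l i * bbar i) + w) * (-1) := sum_snoc_mul _ _ _ _
  have hswap : (∑ j, P j * x j) = ∑ i, l i * (∑ j, Abar i j * x j) := by
    simp_rw [hP, Finset.sum_mul, Finset.mul_sum, mul_assoc]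
    exact Finset.sum_comm
  have hcomb : ∑ i, l i * ((∑ j, Abar i j * x j) + bbar i) ≤ ∑ i, l i * (-(α * N)) := by
    apply Finset.sum_le_sum
    intro i _
    apply mul_le_mul_of_nonneg_left _ (hl.1 i)
    have := hxc i
    linarith
  have hsum1 : ∑ i, l i * (-(α * N)) = -(α * N) := by
    rw [← Finset.sum_mul, hl.2, one_mul]
  have hsplit : ∑ i, l i * ((∑ j, Abar i j * x j) + bbar i)
      = (∑ i, l i * (∑ j, Abar i j * x j)) + ∑ i, l i * bbar i := by
    rw [← Finset.sum_add_distrib]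
    exact Finset.sum_congr rfl fun i _ => by ring
  have hdot_le : ∑ k : Fin (n+1), Fin.snoc P (-(∑ i, l i * bbar i) + w) k * Fin.snoc x (-1) k
      ≤ -(α * N) := by
    rw [hdot, hswap]
    have : (-(∑ i, l i * bbar i) + w) * (-1) = (∑ i, l i * bbar i) - w := by ring
    rw [this]
    linarith [hcomb, hsum1, hsplit, hw]
  have habs := abs_dot_le (Fin.snoc P (-(∑ i, l i * bbar i) + w)) (Fin.snoc x (-1))
  have hE : _root_.enorm (Fin.snoc x (-1)) = N := by rw [enorm_snoc_neg_one, hN]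
  rw [hE] at habs
  have h1 : α * N ≤ _root_.enorm (Fin.snoc P (-(∑ i, l i * bbar i) + w)) * N := by
    have h2 : α * N ≤ |∑ k : Fin (n+1),
        Fin.snoc P (-(∑ i, l i * bbar i) + w) k * Fin.snoc x (-1) k| := by
      rw [abs_of_nonpos (le_trans hdot_le (by nlinarith))]
      linarith
    linarith
  exact le_of_mul_le_mul_right h1 hN0

lemma lb_lemma {m n : ℕ} (Abar : Fin m → Fin n → ℝ) (bbar : Fin m → ℝ) (hm : 0 < m)
    {α : ℝ} (hα : 0 ≤ α) (hαd : α < edist0 Abar bbar (stdSimplex ℝ (Fin m))) :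
    (Feas {v : Fin m → ℝ | ∀ i, 0 ≤ v i} Abar bbar (fun _ => α)).Nonempty := by
  obtain ⟨z, s, hs0, hnorm, hineq⟩ := key_min Abar bbar hm
  set d := edist0 Abar bbar (stdSimplex ℝ (Fin m)) with hd
  have hd0 : 0 ≤ d := le_trans hα (le_of_lt hαd)
  have hzs : (∑ j, z j ^ 2) + s ^ 2 = d ^ 2 := by
    rw [← enorm_snoc_sq, hnorm]
  rcases hs0.lt_or_eq with hs | hs
  · -- s > 0
    set x : Fin n → ℝ := fun j => -(z j) / s with hxdef
    refine ⟨x, (mem_feas_iff Abar bbar hα x).mpr ?_⟩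
    intro i
    have hE : _root_.enorm (Fin.snoc x 1) = s⁻¹ * d := by
      have hxs : (Fin.snoc x 1 : Fin (n+1) → ℝ)
          = s⁻¹ • (Fin.snoc (fun j => -(z j)) s : Fin (n+1) → ℝ) := by
        funext k
        refine Fin.lastCases ?_ (fun j => ?_) k
        · simp [Fin.snoc_last]
          rw [inv_mul_cancel₀ (ne_of_gt hs)]
        · simp [Fin.snoc_castSucc, hxdef]
          rw [div_eq_inv_mul]
          ring
      rw [hxs, enorm_smul', enorm_snoc_neg_fst, hnorm, abs_of_pos (inv_pos.mpr hs)]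
    have hAx : (-(∑ j, z j * Abar i j)) / s = ∑ j, Abar i j * x j := by
      rw [neg_div, Finset.sum_div, ← Finset.sum_neg_distrib]
      apply Finset.sum_congr rfl
      intro j _
      rw [hxdef]
      ring
    rw [← hAx, hE]
    have hgoal : (-(∑ j, z j * Abar i j)) / s + bbar i + α * (s⁻¹ * d)
        = (-(∑ j, z j * Abar i j) + bbar i * s + α * d) / s := by
      field_simp
    rw [hgoal]
    apply div_nonpos_of_nonpos_of_nonneg _ hs.le
    have h1 := hineq i
    nlinarith [mul_le_mul_of_nonneg_right (le_of_lt hαd) hd0]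
  · -- s = 0
    have hs' : s = 0 := hs.symm
    have hdpos : 0 < d := lt_of_le_of_lt hα hαd
    have hz2 : ∑ j, z j ^ 2 = d ^ 2 := by rw [← hzs, hs']; ring
    have hPi : ∀ i, d ^ 2 ≤ ∑ j, z j * Abar i j := by
      intro i
      have := hineq i
      rw [hs'] at this
      linarith
    set CB := ∑ i, |bbar i| with hCB
    have hCB0 : 0 ≤ CB := Finset.sum_nonneg fun i _ => abs_nonneg _
    have hbCB : ∀ i, bbar i ≤ CB := by
      intro i
      calc bbar i ≤ |bbar i| := le_abs_self _
        _ ≤ CB := Finset.single_le_sum (f := fun i => |bbar i|)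
            (fun j _ => abs_nonneg _) (Finset.mem_univ i)
    set t : ℝ := (CB + α) / (d * (d - α)) with htdef
    have hden : 0 < d * (d - α) := mul_pos hdpos (by linarith)
    have ht0 : 0 ≤ t := div_nonneg (by linarith) hden.le
    set x : Fin n → ℝ := fun j => -t * z j with hxdef
    refine ⟨x, (mem_feas_iff Abar bbar hα x).mpr ?_⟩
    intro i
    have hAx : ∑ j, Abar i j * x j = -t * (∑ j, z j * Abar i j) := by
      rw [Finset.mul_sum]
      apply Finset.sum_congr rfl
      intro j _
      rw [hxdef]
      ring
    have hE2 : _root_.enorm (Fin.snoc x 1) ^ 2 = t ^ 2 * d ^ 2 + 1 := by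
      rw [enorm_snoc_sq]
      have : ∑ j, x j ^ 2 = t ^ 2 * ∑ j, z j ^ 2 := by
        rw [Finset.mul_sum]
        apply Finset.sum_congr rfl
        intro j _
        rw [hxdef]; ring
      rw [this, hz2]
      norm_num
    have htd0 : 0 ≤ t * d := mul_nonneg ht0 hdpos.le
    have hE : _root_.enorm (Fin.snoc x 1) ≤ t * d + 1 := by
      have h2 : _root_.enorm (Fin.snoc x 1) ^ 2 ≤ (t * d + 1) ^ 2 := by
        rw [hE2]; nlinarith
      calc _root_.enorm (Fin.snoc x 1) = Real.sqrt (_root_.enorm (Fin.snoc x 1) ^ 2) :=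
            (Real.sqrt_sq (enorm_nonneg' _)).symm
        _ ≤ Real.sqrt ((t * d + 1) ^ 2) := Real.sqrt_le_sqrt h2
        _ = t * d + 1 := Real.sqrt_sq (by linarith)
    have ht : t * (d * (d - α)) = CB + α := by
      rw [htdef, div_mul_cancel₀ _ (ne_of_gt hden)]
    have htexp : t * (d * (d - α)) = t * d ^ 2 - α * (t * d) := by ring
    have htP : t * d ^ 2 ≤ t * (∑ j, z j * Abar i j) :=
      mul_le_mul_of_nonneg_left (hPi i) ht0
    have hαE : α * _root_.enorm (Fin.snoc x 1) ≤ α * (t * d) + α := by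
      have := mul_le_mul_of_nonneg_left hE hα
      nlinarith
    rw [hAx]
    have hb := hbCB i
    nlinarith [htP, hαE, ht, htexp, hb]


theorem statement19' {m n : ℕ} (Abar : Fin m → Fin n → ℝ) (bbar : Fin m → ℝ)
    (hfeas : ∃ x : Fin n → ℝ, ∀ i, (∑ j, Abar i j * x j) + bbar i ≤ 0) :
    rrf {v : Fin m → ℝ | ∀ i, 0 ≤ v i} Abar bbar =
        edist0 Abar bbar {l : Fin m → ℝ | (∀ i, 0 ≤ l i) ∧ ∑ i, l i = 1} ∧
      edist0 Abar bbar {l : Fin m → ℝ | (∀ i, 0 ≤ l i) ∧ ∑ i, l i = 1} =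
        sInf {t : ℝ | ∃ z : Fin n → ℝ, ∃ s : ℝ,
          ∃ l ∈ {l : Fin m → ℝ | (∀ i, 0 ≤ l i) ∧ ∑ i, l i = 1},
          _root_.enorm (Fin.snoc z s) ≤ t ∧ (∀ j, z j = ∑ i, l i * Abar i j) ∧
            -(∑ i, l i * bbar i) ≤ s} := by
  classical
  have hstd : {l : Fin m → ℝ | (∀ i, 0 ≤ l i) ∧ ∑ i, l i = 1} = stdSimplex ℝ (Fin m) := rfl
  rw [hstd]
  rcases Nat.eq_zero_or_pos m with hm | hm
  · -- m = 0
    subst hm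
    have hΔempty : stdSimplex ℝ (Fin 0) = ∅ := by
      ext l
      simp [stdSimplex]
    have hSempty : {t : ℝ | ∃ y ∈ Epi Abar bbar (stdSimplex ℝ (Fin 0)), t = _root_.enorm y} = ∅ := by
      ext t
      simp [Epi, hΔempty]
    have hTempty : {t : ℝ | ∃ z : Fin n → ℝ, ∃ s : ℝ,
        ∃ l ∈ stdSimplex ℝ (Fin 0),
        _root_.enorm (Fin.snoc z s) ≤ t ∧ (∀ j, z j = ∑ i, l i * Abar i j) ∧
          -(∑ i, l i * bbar i) ≤ s} = ∅ := by
      ext t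
      simp [hΔempty]
    have hd : edist0 Abar bbar (stdSimplex ℝ (Fin 0)) = 0 := by
      rw [edist0, hSempty, Real.sInf_empty]
    have hA : ¬ BddAbove {α : ℝ | 0 ≤ α ∧ (fun _ => α) ∈ Adm
        {v : Fin 0 → ℝ | ∀ i, 0 ≤ v i} Abar bbar} := by
      rintro ⟨u, hu⟩
      have hmem : max u 0 + 1 ∈ {α : ℝ | 0 ≤ α ∧ (fun _ => α) ∈ Adm
          {v : Fin 0 → ℝ | ∀ i, 0 ≤ v i} Abar bbar} := by
        refine ⟨by positivity, fun i => i.elim0, ⟨0, ?_⟩⟩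
        intro a b _
        rw [Set.mem_neg]
        intro i
        exact i.elim0
      have := hu hmem
      have h1 : u ≤ max u 0 := le_max_left _ _
      linarith
    constructor
    · rw [rrf, Real.sSup_of_not_bddAbove hA, hd]
    · rw [hd, hTempty, Real.sInf_empty]
  · -- m > 0
    have hd0 : 0 ≤ edist0 Abar bbar (stdSimplex ℝ (Fin m)) := by
      apply Real.sInf_nonneg
      rintro t ⟨y, _, rfl⟩
      exact enorm_nonneg' y
    set d := edist0 Abar bbar (stdSimplex ℝ (Fin m)) with hddef
    constructor
    · -- rrf = d
      obtain ⟨x₀, hx₀⟩ := hfeas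
      have h0A : (0:ℝ) ∈ {α : ℝ | 0 ≤ α ∧ (fun _ => α) ∈ Adm
          {v : Fin m → ℝ | ∀ i, 0 ≤ v i} Abar bbar} := by
        refine ⟨le_rfl, fun i => le_rfl, ⟨x₀, (mem_feas_iff Abar bbar le_rfl x₀).mpr ?_⟩⟩
        intro i
        simpa using hx₀ i
      have hub : ∀ α ∈ {α : ℝ | 0 ≤ α ∧ (fun _ => α) ∈ Adm
          {v : Fin m → ℝ | ∀ i, 0 ≤ v i} Abar bbar}, α ≤ d := by
        rintro α ⟨hα, _, x, hx⟩
        exact ub_lemma Abar bbar hm hα hx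
      have hbddA : BddAbove {α : ℝ | 0 ≤ α ∧ (fun _ => α) ∈ Adm
          {v : Fin m → ℝ | ∀ i, 0 ≤ v i} Abar bbar} := ⟨d, hub⟩
      rw [rrf]
      apply le_antisymm (csSup_le ⟨0, h0A⟩ hub)
      rcases eq_or_lt_of_le hd0 with hdz | hdz
      · rw [← hdz]
        exact le_csSup hbddA h0A
      · have hsub : Set.Ico (0:ℝ) d ⊆ {α : ℝ | 0 ≤ α ∧ (fun _ => α) ∈ Adm
            {v : Fin m → ℝ | ∀ i, 0 ≤ v i} Abar bbar} := by
          rintro α ⟨h1, h2⟩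
          exact ⟨h1, fun i => h1, lb_lemma Abar bbar hm h1 h2⟩
        calc d = sSup (Set.Ico (0:ℝ) d) := (csSup_Ico hdz).symm
          _ ≤ _ := csSup_le_csSup hbddA ⟨0, le_rfl, hdz⟩ hsub
    · -- d = sInf T
      set T := {t : ℝ | ∃ z : Fin n → ℝ, ∃ s : ℝ,
          ∃ l ∈ stdSimplex ℝ (Fin m),
          _root_.enorm (Fin.snoc z s) ≤ t ∧ (∀ j, z j = ∑ i, l i * Abar i j) ∧
            -(∑ i, l i * bbar i) ≤ s} with hT
      have hSsubT : ∀ t ∈ {t : ℝ | ∃ y ∈ Epi Abar bbar (stdSimplex ℝ (Fin m)), t = _root_.enorm y},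
          t ∈ T := by
        rintro t ⟨y, ⟨l, hl, w, hw, rfl⟩, rfl⟩
        exact ⟨fun j => ∑ i, l i * Abar i j, -(∑ i, l i * bbar i) + w, l, hl,
          le_rfl, fun j => rfl, by linarith⟩
      have hTS : ∀ t ∈ T, d ≤ t := by
        rintro t ⟨z, s, l, hl, ht, hz, hs⟩
        have hzz : z = fun j => ∑ i, l i * Abar i j := funext hz
        have hmem : _root_.enorm (Fin.snoc z s)
            ∈ {t : ℝ | ∃ y ∈ Epi Abar bbar (stdSimplex ℝ (Fin m)), t = _root_.enorm y} := by
          refine ⟨Fin.snoc z s, ⟨l, hl, s + ∑ i, l i * bbar i, by linarith, ?_⟩, rfl⟩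
          rw [hzz]
          congr 1
          ring
        calc d ≤ _root_.enorm (Fin.snoc z s) := csInf_le ⟨0, by
              rintro u ⟨y, _, rfl⟩; exact enorm_nonneg' y⟩ hmem
          _ ≤ t := ht
      have hTne : T.Nonempty := by
        obtain ⟨t, ht⟩ := S_nonempty Abar bbar hm
        exact ⟨t, hSsubT t ht⟩
      apply le_antisymm
      · exact le_csInf hTne fun t ht => by
          obtain ⟨z, s, l, hl, hts, hz, hs⟩ := ht
          exact hTS t ⟨z, s, l, hl, hts, hz, hs⟩
      · apply le_csInf (S_nonempty Abar bbar hm)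
        intro t ht
        exact csInf_le ⟨0, by
          rintro u ⟨z, s, l, hl, hts, hz, hs⟩
          exact le_trans (enorm_nonneg' _) hts⟩ (hSsubT t ht)

/-- exact formula for the radius of robust feasibility of uncertain LPs. -/
theorem statement19 {m n : ℕ} (Abar : Fin m → Fin n → ℝ) (bbar : Fin m → ℝ)
    (hfeas : ∃ x : Fin n → ℝ, ∀ i, (∑ j, Abar i j * x j) + bbar i ≤ 0) :
    rrf {v : Fin m → ℝ | ∀ i, 0 ≤ v i} Abar bbar =
        edist0 Abar bbar {l : Fin m → ℝ | (∀ i, 0 ≤ l i) ∧ ∑ i, l i = 1} ∧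
      edist0 Abar bbar {l : Fin m → ℝ | (∀ i, 0 ≤ l i) ∧ ∑ i, l i = 1} =
        sInf {t : ℝ | ∃ z : Fin n → ℝ, ∃ s : ℝ,
          ∃ l ∈ {l : Fin m → ℝ | (∀ i, 0 ≤ l i) ∧ ∑ i, l i = 1},
          enorm (Fin.snoc z s) ≤ t ∧ (∀ j, z j = ∑ i, l i * Abar i j) ∧
            -(∑ i, l i * bbar i) ≤ s} := by
  exact statement19' Abar bbar hfeas
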